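/- Let k be a field, q ∈ k a nonzero element, and let S_q² be the quotient of the free associative k-algebra on generators b₊, b₋, b₃ by the two-sided ideal generated by the relations b₊b₃ − q²b₃b₊ − (1−q²)b₊, b₋b₃ − q⁻²b₃b₋ − (1−q⁻²)b₋, q²b₋b₊ − q⁻²b₊b₋ − (q−q⁻¹)(b₃−1), and b₃² − b₃ − q b₋b₊. Then the 2×2 matrix p = [[q²(1−b₃), −q b₊], [b₋, b₃]] over S_q² satisfies p² = p; equivalently, the Hajac–Majid element e = 1 − p is an idempotent in M₂(S_q²). -/

import Mathlib

/-- The defining relations of the standard quantum sphere `S_q²`: with generators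
`b₊ = ι 0`, `b₋ = ι 1`, `b₃ = ι 2` of the free algebra, the relations are
`b₊b₃ = q²b₃b₊ + (1−q²)b₊`, `b₋b₃ = q⁻²b₃b₋ + (1−q⁻²)b₋`,
`q²b₋b₊ = q⁻²b₊b₋ + (q−q⁻¹)(b₃−1)`, and `b₃² = b₃ + q b₋b₊`. -/
inductive QuantumSphereRel (k : Type*) [Field k] (q : k) :
    FreeAlgebra k (Fin 3) → FreeAlgebra k (Fin 3) → Prop
  | plus_three :
      QuantumSphereRel k q (FreeAlgebra.ι k 0 * FreeAlgebra.ι k 2)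
        (q ^ 2 • (FreeAlgebra.ι k 2 * FreeAlgebra.ι k 0) + (1 - q ^ 2) • FreeAlgebra.ι k 0)
  | minus_three :
      QuantumSphereRel k q (FreeAlgebra.ι k 1 * FreeAlgebra.ι k 2)
        (q⁻¹ ^ 2 • (FreeAlgebra.ι k 2 * FreeAlgebra.ι k 1) +
          (1 - q⁻¹ ^ 2) • FreeAlgebra.ι k 1)
  | minus_plus :
      QuantumSphereRel k q (q ^ 2 • (FreeAlgebra.ι k 1 * FreeAlgebra.ι k 0))
        (q⁻¹ ^ 2 • (FreeAlgebra.ι k 0 * FreeAlgebra.ι k 1) +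
          (q - q⁻¹) • (FreeAlgebra.ι k 2 - 1))
  | three_three :
      QuantumSphereRel k q (FreeAlgebra.ι k 2 * FreeAlgebra.ι k 2)
        (FreeAlgebra.ι k 2 + q • (FreeAlgebra.ι k 1 * FreeAlgebra.ι k 0))

/-- The coordinate algebra `S_q²` of the standard quantum sphere: the quotient of the
free algebra `k⟨b₊, b₋, b₃⟩` by the two-sided ideal generated by the stated relations. -/
abbrev QuantumSphere (k : Type*) [Field k] (q : k) : Type _ := RingQuot (QuantumSphereRel k q)

section Entries

variable {k : Type*} [Field k] {q : k} {R : Type*} [Ring R] [Algebra k R]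
variable (bp bm b3 : R)

theorem qs_e00 (hq : q ≠ 0)
    (r3 : q ^ 2 • (bm * bp) = q⁻¹ ^ 2 • (bp * bm) + (q - q⁻¹) • (b3 - 1))
    (r4 : b3 * b3 = b3 + q • (bm * bp)) :
    (q ^ 2 • ((1 : R) - b3)) * (q ^ 2 • (1 - b3)) + (-(q • bp)) * bm
      = q ^ 2 • ((1 : R) - b3) := by
  have r3' : (q ^ 4 : k) • (bm * bp) = bp * bm + (q ^ 3 - q) • b3 - (q ^ 3 - q) • (1 : R) := by
    have h := congrArg (fun x => (q ^ 2 : k) • x) r3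
    simp only [smul_add, smul_smul, smul_sub] at h
    rw [show q ^ 2 * q ^ 2 = q ^ 4 by ring, show q ^ 2 * q⁻¹ ^ 2 = 1 by field_simp,
      show q ^ 2 * (q - q⁻¹) = q ^ 3 - q by field_simp, one_smul] at h
    rw [h]; abel
  simp only [mul_smul_comm, smul_mul_assoc, mul_sub, sub_mul, mul_one, one_mul, mul_neg,
    neg_mul, smul_smul, smul_sub, smul_add]
  linear_combination (norm := module) (q ^ 4 : k) • r4 + (q : k) • r3'

theorem qs_e01
    (r1 : bp * b3 = q ^ 2 • (b3 * bp) + (1 - q ^ 2) • bp) :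
    (q ^ 2 • ((1 : R) - b3)) * (-(q • bp)) + (-(q • bp)) * b3 = -(q • bp) := by
  simp only [mul_smul_comm, smul_mul_assoc, mul_sub, sub_mul, mul_one, one_mul, mul_neg,
    neg_mul, smul_smul, smul_sub, smul_add]
  linear_combination (norm := module) (-q : k) • r1

theorem qs_e10 (hq : q ≠ 0)
    (r2 : bm * b3 = q⁻¹ ^ 2 • (b3 * bm) + (1 - q⁻¹ ^ 2) • bm) :
    bm * (q ^ 2 • ((1 : R) - b3)) + b3 * bm = bm := by
  have r2' : (q ^ 2 : k) • (bm * b3) = b3 * bm + (q ^ 2 - 1) • bm := by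
    have h := congrArg (fun x => (q ^ 2 : k) • x) r2
    simp only [smul_add, smul_smul] at h
    rw [show q ^ 2 * q⁻¹ ^ 2 = 1 by field_simp,
      show q ^ 2 * (1 - q⁻¹ ^ 2) = q ^ 2 - 1 by field_simp, one_smul] at h
    exact h
  simp only [mul_smul_comm, smul_mul_assoc, mul_sub, sub_mul, mul_one, one_mul, mul_neg,
    neg_mul, smul_smul, smul_sub, smul_add]
  linear_combination (norm := module) (-1 : k) • r2'

theorem qs_e11
    (r4 : b3 * b3 = b3 + q • (bm * bp)) :
    bm * (-(q • bp)) + b3 * b3 = b3 := by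
  simp only [mul_neg, mul_smul_comm]
  linear_combination (norm := module) r4

end Entries

/-- **The Hajac–Majid projector on the standard quantum sphere.**
Let `k` be a field and `q ∈ k` nonzero, and let `b₊, b₋, b₃` denote the images of the
generators in `S_q²`.  Then the `2×2` matrix `p = [[q²(1−b₃), −q b₊], [b₋, b₃]]` over
`S_q²` satisfies `p² = p`; equivalently, the Hajac–Majid element `e = 1 − p` is an
idempotent in `M₂(S_q²)`. -/
theorem quantumSphere_projector (k : Type*) [Field k] (q : k) (hq : q ≠ 0)
    (bp bm b3 : QuantumSphere k q)
    (hbp : bp = RingQuot.mkAlgHom k (QuantumSphereRel k q) (FreeAlgebra.ι k 0))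
    (hbm : bm = RingQuot.mkAlgHom k (QuantumSphereRel k q) (FreeAlgebra.ι k 1))
    (hb3 : b3 = RingQuot.mkAlgHom k (QuantumSphereRel k q) (FreeAlgebra.ι k 2))
    (p : Matrix (Fin 2) (Fin 2) (QuantumSphere k q))
    (hp : p = !![algebraMap k (QuantumSphere k q) (q ^ 2) * (1 - b3),
                 -(algebraMap k (QuantumSphere k q) q * bp);
                 bm, b3]) :
    p * p = p ∧ (1 - p) * (1 - p) = 1 - p := by
  have r1 := RingQuot.mkAlgHom_rel k (QuantumSphereRel.plus_three (k := k) (q := q))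
  have r2 := RingQuot.mkAlgHom_rel k (QuantumSphereRel.minus_three (k := k) (q := q))
  have r3 := RingQuot.mkAlgHom_rel k (QuantumSphereRel.minus_plus (k := k) (q := q))
  have r4 := RingQuot.mkAlgHom_rel k (QuantumSphereRel.three_three (k := k) (q := q))
  simp only [map_mul, map_add, map_smul, map_sub, map_one] at r1 r2 r3 r4
  simp only [← hbp, ← hbm, ← hb3] at r1 r2 r3 r4
  have hp' : p = !![(q ^ 2 : k) • (1 - b3), -(q • bp); bm, b3] := by
    rw [hp]; simp only [← Algebra.smul_def]
  have hpp : p * p = p := by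
    rw [hp']
    ext i j
    fin_cases i <;> fin_cases j <;>
      simp only [Matrix.mul_apply, Fin.sum_univ_two, Matrix.cons_val', Matrix.cons_val_zero,
        Matrix.cons_val_one, Matrix.head_cons, Matrix.head_fin_const, Matrix.empty_val',
        Matrix.cons_val_fin_one]
    · exact qs_e00 bp bm b3 hq r3 r4
    · exact qs_e01 bp b3 r1
    · exact qs_e10 bm b3 hq r2
    · exact qs_e11 bp bm b3 r4
  refine ⟨hpp, ?_⟩
  rw [sub_mul, mul_sub, mul_sub, hpp]; simp only [one_mul, mul_one]
  abel
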